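/- For the Ziegler pendulum with F = 0 and k₂ = 0, the function K(φ₁, v₁, v₂) = m₁(v₂l₂² + (v₁+v₂)l₁² + l₁l₂ cos φ₁ (v₁+2v₂)) + m₂ v₂ l₂² + m₃(v₂l₂² + (v₁+v₂)l₃² - l₂l₃(v₁+2v₂) cos φ₁) is a first integral of the reduced system: it is constant along every solution. -/

import Mathlib

/-- The angular momentum (cyclic integral) `K = ∂T/∂φ₂'`. -/
noncomputable def Kmom (m1 m2 m3 l1 l2 l3 φ v1 v2 : ℝ) : ℝ :=
  m1 * (v2 * l2 ^ 2 + (v1 + v2) * l1 ^ 2 + l1 * l2 * Real.cos φ * (v1 + 2 * v2)) +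
    m2 * v2 * l2 ^ 2 +
    m3 * (v2 * l2 ^ 2 + (v1 + v2) * l3 ^ 2 - l2 * l3 * (v1 + 2 * v2) * Real.cos φ)

/-- For `F = 0` and `k₂ = 0`, the angular momentum `K` is a first integral of the
reduced Ziegler pendulum system. -/
theorem angular_momentum_first_integral
    (m1 m2 m3 l1 l2 l3 k1 : ℝ)
    (hm1 : 0 < m1) (hm2 : 0 < m2) (hm3 : 0 < m3)
    (hl1 : 0 < l1) (hl2 : 0 < l2) (hl3 : 0 < l3)
    (φ v1 v2 a1 a2 : ℝ → ℝ)
    (hφ : ∀ t, HasDerivAt φ (v1 t) t)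
    (hv1 : ∀ t, HasDerivAt v1 (a1 t) t)
    (hv2 : ∀ t, HasDerivAt v2 (a2 t) t)
    -- the linear system A·(a₁, a₂) = (r₁, r₂) with F = 0
    (heq1 : ∀ t, (m1 * l1 ^ 2 + m3 * l3 ^ 2) * a1 t +
        (m1 * l1 ^ 2 + m3 * l3 ^ 2 + (m1 * l1 - m3 * l3) * l2 * Real.cos (φ t)) * a2 t =
      -k1 * φ t - (m1 * l1 - m3 * l3) * l2 * (v2 t) ^ 2 * Real.sin (φ t))
    (heq2 : ∀ t, (m1 * l1 ^ 2 + m3 * l3 ^ 2 + (m1 * l1 - m3 * l3) * l2 * Real.cos (φ t)) * a1 t +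
        ((m1 + m2 + m3) * l2 ^ 2 + m1 * l1 ^ 2 + m3 * l3 ^ 2 +
          2 * (m1 * l1 - m3 * l3) * l2 * Real.cos (φ t)) * a2 t =
      (m1 * l1 - m3 * l3) * l2 * v1 t * (v1 t + 2 * v2 t) * Real.sin (φ t))
    -- nondegeneracy of the mass matrix along the solution
    (hdet : ∀ t, (m1 * l1 ^ 2 + m3 * l3 ^ 2) *
        ((m1 + m2 + m3) * l2 ^ 2 + m1 * l1 ^ 2 + m3 * l3 ^ 2 +
          2 * (m1 * l1 - m3 * l3) * l2 * Real.cos (φ t)) -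
        (m1 * l1 ^ 2 + m3 * l3 ^ 2 + (m1 * l1 - m3 * l3) * l2 * Real.cos (φ t)) ^ 2 ≠ 0) :
    ∀ t s : ℝ, Kmom m1 m2 m3 l1 l2 l3 (φ t) (v1 t) (v2 t) =
      Kmom m1 m2 m3 l1 l2 l3 (φ s) (v1 s) (v2 s) := by
  set g : ℝ → ℝ := fun t => Kmom m1 m2 m3 l1 l2 l3 (φ t) (v1 t) (v2 t) with hg
  have hderiv : ∀ t, HasDerivAt g 0 t := by
    intro t
    have hc : HasDerivAt (fun t => Real.cos (φ t)) (-Real.sin (φ t) * v1 t) t := (hφ t).cos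
    have h1 : HasDerivAt
        (fun t => v2 t * l2 ^ 2 + (v1 t + v2 t) * l1 ^ 2 +
          l1 * l2 * Real.cos (φ t) * (v1 t + 2 * v2 t))
        (a2 t * l2 ^ 2 + (a1 t + a2 t) * l1 ^ 2 +
          (l1 * l2 * (-Real.sin (φ t) * v1 t) * (v1 t + 2 * v2 t) +
            l1 * l2 * Real.cos (φ t) * (a1 t + 2 * a2 t))) t :=
      (((hv2 t).mul_const _).add (((hv1 t).add (hv2 t)).mul_const _)).add
        ((hc.const_mul (l1 * l2)).mul ((hv1 t).add ((hv2 t).const_mul 2)))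
    have h2 : HasDerivAt (fun t => m2 * v2 t * l2 ^ 2) (m2 * a2 t * l2 ^ 2) t :=
      ((hv2 t).const_mul m2).mul_const _
    have h3 : HasDerivAt
        (fun t => v2 t * l2 ^ 2 + (v1 t + v2 t) * l3 ^ 2 -
          l2 * l3 * (v1 t + 2 * v2 t) * Real.cos (φ t))
        (a2 t * l2 ^ 2 + (a1 t + a2 t) * l3 ^ 2 -
          (l2 * l3 * (a1 t + 2 * a2 t) * Real.cos (φ t) +
            l2 * l3 * (v1 t + 2 * v2 t) * (-Real.sin (φ t) * v1 t))) t :=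
      (((hv2 t).mul_const _).add (((hv1 t).add (hv2 t)).mul_const _)).sub
        ((((hv1 t).add ((hv2 t).const_mul 2)).const_mul (l2 * l3)).mul hc)
    have hD := ((h1.const_mul m1).add h2).add (h3.const_mul m3)
    have hDval :
        m1 * (a2 t * l2 ^ 2 + (a1 t + a2 t) * l1 ^ 2 +
          (l1 * l2 * (-Real.sin (φ t) * v1 t) * (v1 t + 2 * v2 t) +
            l1 * l2 * Real.cos (φ t) * (a1 t + 2 * a2 t))) +
        m2 * a2 t * l2 ^ 2 +
        m3 * (a2 t * l2 ^ 2 + (a1 t + a2 t) * l3 ^ 2 -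
          (l2 * l3 * (a1 t + 2 * a2 t) * Real.cos (φ t) +
            l2 * l3 * (v1 t + 2 * v2 t) * (-Real.sin (φ t) * v1 t))) = 0 := by
      linear_combination heq2 t
    have : HasDerivAt g (m1 * (a2 t * l2 ^ 2 + (a1 t + a2 t) * l1 ^ 2 +
          (l1 * l2 * (-Real.sin (φ t) * v1 t) * (v1 t + 2 * v2 t) +
            l1 * l2 * Real.cos (φ t) * (a1 t + 2 * a2 t))) +
        m2 * a2 t * l2 ^ 2 +
        m3 * (a2 t * l2 ^ 2 + (a1 t + a2 t) * l3 ^ 2 -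
          (l2 * l3 * (a1 t + 2 * a2 t) * Real.cos (φ t) +
            l2 * l3 * (v1 t + 2 * v2 t) * (-Real.sin (φ t) * v1 t)))) t := by
      simpa [hg, Kmom, add_assoc, Pi.add_def] using hD
    rw [hDval] at this
    exact this
  intro t s
  exact is_const_of_deriv_eq_zero (fun x => (hderiv x).differentiableAt)
    (fun x => (hderiv x).deriv) t s
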